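/- For every α, β with 0 < α, 0 < β, α + β < 1 and every c ∈ [0,1], there exists τ ∈ (0,1) such that R_a(τ, c) = (1-τ)α/(1-τα) + (β/(1-τα) + cτα(1-α-β)/(1-τα))·(τα/(β+τα)) > α. In other words, the FAW attack is always more profitable than honest mining. -/

import Mathlib

theorem faw_attack_profitable (α β c : ℝ)
    (hα : 0 < α) (hβ : 0 < β) (hαβ : α + β < 1) (hc0 : 0 ≤ c) (hc1 : c ≤ 1) :
    ∃ τ ∈ Set.Ioo (0 : ℝ) 1,
      α < (1 - τ) * α / (1 - τ * α)
        + (β / (1 - τ * α) + c * (τ * α) * (1 - α - β) / (1 - τ * α)) * (τ * α / (β + τ * α)) := by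
  have h1α : 0 < 1 - α := by linarith
  obtain ⟨τ, hτdef⟩ : ∃ τ : ℝ, τ = β / (2 * (1 - α)) := ⟨_, rfl⟩
  have hτ0 : 0 < τ := by rw [hτdef]; positivity
  have hτ1 : τ < 1 := by
    rw [hτdef, div_lt_one (by positivity)]
    linarith
  have hτα : τ * α < 1 := by nlinarith
  have hD : 0 < 1 - τ * α := by linarith
  have hE : 0 < β + τ * α := by positivity
  have hkey : τ * ((1 - α) - c * (1 - α - β)) < β := by
    have h1 : c * (1 - α - β) ≥ 0 := by nlinarith
    have h2 : τ * (1 - α) = β / 2 := by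
      rw [hτdef]; field_simp
    nlinarith
  refine ⟨τ, ⟨hτ0, hτ1⟩, ?_⟩
  rw [← sub_pos]
  have hne1 : (1 - τ * α) ≠ 0 := ne_of_gt hD
  have hne2 : (β + τ * α) ≠ 0 := ne_of_gt hE
  have : (1 - τ) * α / (1 - τ * α)
        + (β / (1 - τ * α) + c * (τ * α) * (1 - α - β) / (1 - τ * α)) * (τ * α / (β + τ * α)) - α
      = τ * α * α * (β - τ * ((1 - α) - c * (1 - α - β))) / ((1 - τ * α) * (β + τ * α)) := by
    field_simp
    ring
  rw [this]
  apply div_pos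
  · exact mul_pos (mul_pos (mul_pos hτ0 hα) hα) (by linarith)
  · positivity
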